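/- Let X be a complex Hilbert space, let M₁, …, M_N (N ≥ 2) be closed subspaces of X, let P_k denote the orthogonal projection of X onto M_k, let M = M₁ ∩ … ∩ M_N with orthogonal projection P_M, and let T = P_N ⋯ P₁. Then ‖T^n x − P_M x‖ → 0 as n → ∞ for every x ∈ X, and there exists a dense linear subspace X_∞ of X such that for all x ∈ X_∞ and every real number α > 0 one has n^α · ‖T^n x − P_M x‖ → 0 as n → ∞ (super-polynomially fast convergence). -/

import Mathlib

open Filter Topology

/-- The orthogonal projection onto a subspace, as an endomorphism. -/
noncomputable def projOnto {X : Type*} [NormedAddCommGroup X] [InnerProductSpace ℂ X]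
    (K : Submodule ℂ X) [Submodule.HasOrthogonalProjection K] : X →L[ℂ] X :=
  K.subtypeL.comp (Submodule.orthogonalProjectionOnto K)

/-- The product `P_k ⋯ P_1` of the orthogonal projections onto the first `k` of the
subspaces `M 0, …, M (N-1)` (applied in order: first `P_1 = projOnto (M 0)`, etc.);
for `k = N` this is the operator `T = P_N ⋯ P_1` of the method of cyclic alternating
projections. -/
noncomputable def cycleProd {X : Type*} [NormedAddCommGroup X] [InnerProductSpace ℂ X]
    {N : ℕ} (M : Fin N → Submodule ℂ X) [∀ i, CompleteSpace (M i)] (k : ℕ) :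
    X →L[ℂ] X :=
  (((List.ofFn fun i => projOnto (M i)).take k).reverse).prod

section aux
variable {X : Type*} [NormedAddCommGroup X] [InnerProductSpace ℂ X]

lemma projOnto_apply (K : Submodule ℂ X) [Submodule.HasOrthogonalProjection K] (x : X) :
    projOnto K x = (Submodule.orthogonalProjectionOnto K x : X) := rfl

lemma projOnto_mem (K : Submodule ℂ X) [Submodule.HasOrthogonalProjection K] (x : X) :
    projOnto K x ∈ K := (Submodule.orthogonalProjectionOnto K x).2

lemma projOnto_eq_self (K : Submodule ℂ X) [Submodule.HasOrthogonalProjection K] {x : X} (hx : x ∈ K) :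
    projOnto K x = x := by
  exact (Submodule.starProjection_eq_self_iff (K := K)).2 hx

lemma sub_projOnto_mem_orthogonal (K : Submodule ℂ X) [Submodule.HasOrthogonalProjection K] (x : X) :
    x - projOnto K x ∈ Kᗮ := Submodule.sub_starProjection_mem_orthogonal x

lemma sub_projOnto_sq (K : Submodule ℂ X) [Submodule.HasOrthogonalProjection K] (x : X) :
    ‖x - projOnto K x‖ ^ 2 = ‖x‖ ^ 2 - ‖projOnto K x‖ ^ 2 := by
  have h : @inner ℂ _ _ (x - projOnto K x) (projOnto K x) = 0 :=
    (Submodule.mem_orthogonal' _ _).1 (sub_projOnto_mem_orthogonal K x) _ (projOnto_mem K x)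
  have := norm_add_sq_eq_norm_sq_add_norm_sq_of_inner_eq_zero (x - projOnto K x) (projOnto K x) h
  rw [sub_add_cancel] at this
  linarith

lemma norm_projOnto_le (K : Submodule ℂ X) [Submodule.HasOrthogonalProjection K] (x : X) :
    ‖projOnto K x‖ ≤ ‖x‖ := by
  have := sub_projOnto_sq K x
  have h2 : (0:ℝ) ≤ ‖x - projOnto K x‖ ^ 2 := sq_nonneg _
  nlinarith [norm_nonneg (projOnto K x), norm_nonneg x]

lemma projOnto_eq_zero (K : Submodule ℂ X) [Submodule.HasOrthogonalProjection K] {x : X} (hx : x ∈ Kᗮ) :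
    projOnto K x = 0 := by
  rw [projOnto_apply, Submodule.orthogonalProjectionOnto_apply_of_mem_orthogonal hx,
    Submodule.coe_zero]



variable {N : ℕ} (M : Fin N → Submodule ℂ X) [∀ i, CompleteSpace (M i)]

lemma cycleProd_zero : cycleProd M 0 = 1 := by simp [cycleProd]

lemma cycleProd_succ {k : ℕ} (hk : k < N) :
    cycleProd M (k + 1) = projOnto (M ⟨k, hk⟩) * cycleProd M k := by
  unfold cycleProd
  rw [List.take_succ]
  have h : (List.ofFn fun i => projOnto (M i))[k]? = some (projOnto (M ⟨k, hk⟩)) := by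
    rw [List.getElem?_eq_getElem (by simpa using hk)]
    simp
  rw [h]
  simp

lemma cycleProd_succ_apply {k : ℕ} (hk : k < N) (x : X) :
    cycleProd M (k + 1) x = projOnto (M ⟨k, hk⟩) (cycleProd M k x) := by
  rw [cycleProd_succ M hk]; rfl

lemma cycleProd_zero_apply (x : X) : cycleProd M 0 x = x := by
  rw [cycleProd_zero]; rfl

lemma norm_cycleProd_antitone {j k : ℕ} (hjk : j ≤ k) (hk : k ≤ N) (x : X) :
    ‖cycleProd M k x‖ ≤ ‖cycleProd M j x‖ := by
  induction k with
  | zero => simp_all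
  | succ k ih =>
    rcases Nat.eq_or_lt_of_le hjk with h | h
    · subst h; exact le_rfl
    · have hkN : k < N := hk
      calc ‖cycleProd M (k + 1) x‖ = ‖projOnto (M ⟨k, hkN⟩) (cycleProd M k x)‖ := by
            rw [cycleProd_succ_apply M hkN]
        _ ≤ ‖cycleProd M k x‖ := norm_projOnto_le _ _
        _ ≤ ‖cycleProd M j x‖ := ih (Nat.lt_succ_iff.1 h) hkN.le

lemma norm_cycleProd_le {k : ℕ} (hk : k ≤ N) (x : X) : ‖cycleProd M k x‖ ≤ ‖x‖ := by
  simpa [cycleProd_zero_apply] using norm_cycleProd_antitone M (Nat.zero_le k) hk x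

lemma norm_T_le (x : X) : ‖cycleProd M N x‖ ≤ ‖x‖ := norm_cycleProd_le M le_rfl x

lemma norm_T_pow_le (n : ℕ) (x : X) : ‖(cycleProd M N ^ n) x‖ ≤ ‖x‖ := by
  induction n generalizing x with
  | zero => simp
  | succ n ih =>
    rw [pow_succ]
    calc ‖(cycleProd M N ^ n * cycleProd M N) x‖
        = ‖(cycleProd M N ^ n) (cycleProd M N x)‖ := rfl
      _ ≤ ‖cycleProd M N x‖ := ih _
      _ ≤ ‖x‖ := norm_T_le M x

lemma key_ineq (x : X) :
    ‖x - cycleProd M N x‖ ^ 2 ≤ (N : ℝ) * (‖x‖ ^ 2 - ‖cycleProd M N x‖ ^ 2) := by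
  have hsum : x - cycleProd M N x
      = ∑ k ∈ Finset.range N, (cycleProd M k x - cycleProd M (k + 1) x) := by
    rw [Finset.sum_range_sub' (fun k => cycleProd M k x), cycleProd_zero_apply]
  have hterm : ∀ k, k < N → ‖cycleProd M k x - cycleProd M (k + 1) x‖ ^ 2
      = ‖cycleProd M k x‖ ^ 2 - ‖cycleProd M (k + 1) x‖ ^ 2 := by
    intro k hk
    rw [cycleProd_succ_apply M hk]
    exact sub_projOnto_sq _ _
  have h1 : ‖x - cycleProd M N x‖
      ≤ ∑ k ∈ Finset.range N, ‖cycleProd M k x - cycleProd M (k + 1) x‖ := by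
    rw [hsum]; exact norm_sum_le _ _
  have h2 := sq_sum_le_card_mul_sum_sq
    (s := Finset.range N) (f := fun k => ‖cycleProd M k x - cycleProd M (k + 1) x‖)
  have h3 : ∑ k ∈ Finset.range N, ‖cycleProd M k x - cycleProd M (k + 1) x‖ ^ 2
      = ‖x‖ ^ 2 - ‖cycleProd M N x‖ ^ 2 := by
    rw [Finset.sum_congr rfl (fun k hk => hterm k (Finset.mem_range.1 hk)),
      Finset.sum_range_sub' (fun k => ‖cycleProd M k x‖ ^ 2), cycleProd_zero_apply]
  calc ‖x - cycleProd M N x‖ ^ 2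
      ≤ (∑ k ∈ Finset.range N, ‖cycleProd M k x - cycleProd M (k + 1) x‖) ^ 2 :=
        pow_le_pow_left₀ (norm_nonneg _) h1 2
    _ ≤ (N : ℝ) * ∑ k ∈ Finset.range N, ‖cycleProd M k x - cycleProd M (k + 1) x‖ ^ 2 := by
        simpa using h2
    _ = (N : ℝ) * (‖x‖ ^ 2 - ‖cycleProd M N x‖ ^ 2) := by rw [h3]

lemma cycleProd_fix {m : X} (hm : m ∈ ⨅ i, M i) {k : ℕ} (hk : k ≤ N) :
    cycleProd M k m = m := by
  induction k with
  | zero => exact cycleProd_zero_apply M m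
  | succ k ih =>
    have hkN : k < N := hk
    rw [cycleProd_succ_apply M hkN, ih hkN.le]
    exact projOnto_eq_self _ ((Submodule.mem_iInf M).1 hm _)

lemma T_fix {m : X} (hm : m ∈ ⨅ i, M i) : cycleProd M N m = m :=
  cycleProd_fix M hm le_rfl

lemma T_pow_fix (n : ℕ) {m : X} (hm : m ∈ ⨅ i, M i) : (cycleProd M N ^ n) m = m := by
  induction n with
  | zero => simp
  | succ n ih => rw [pow_succ', ContinuousLinearMap.mul_apply, ih, T_fix M hm]

lemma sub_T_mem_orthogonal (x : X) : x - cycleProd M N x ∈ (⨅ i, M i)ᗮ := by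
  have hsum : x - cycleProd M N x
      = ∑ k ∈ Finset.range N, (cycleProd M k x - cycleProd M (k + 1) x) := by
    rw [Finset.sum_range_sub' (fun k => cycleProd M k x), cycleProd_zero_apply]
  rw [hsum]
  refine Submodule.sum_mem _ fun k hk => ?_
  have hkN : k < N := Finset.mem_range.1 hk
  have h1 : cycleProd M k x - cycleProd M (k + 1) x ∈ (M ⟨k, hkN⟩)ᗮ := by
    rw [cycleProd_succ_apply M hkN]
    exact sub_projOnto_mem_orthogonal _ _
  exact Submodule.orthogonal_le (iInf_le M ⟨k, hkN⟩) h1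

lemma mem_iInf_of_fix {x : X} (hx : cycleProd M N x = x) : x ∈ ⨅ i, M i := by
  have hnorm : ∀ k, k ≤ N → ‖cycleProd M k x‖ = ‖x‖ := by
    intro k hk
    have h1 : ‖cycleProd M N x‖ ≤ ‖cycleProd M k x‖ :=
      norm_cycleProd_antitone M hk le_rfl x
    have h2 := norm_cycleProd_le M hk x
    rw [hx] at h1
    linarith
  have hfix : ∀ k, k ≤ N → cycleProd M k x = x := by
    intro k
    induction k with
    | zero => intro _; exact cycleProd_zero_apply M x
    | succ k ih =>
      intro hk
      have hkN : k < N := hk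
      have hx' := ih hkN.le
      rw [cycleProd_succ_apply M hkN, hx']
      have hn : ‖projOnto (M ⟨k, hkN⟩) x‖ = ‖x‖ := by
        have := hnorm (k + 1) hk
        rwa [cycleProd_succ_apply M hkN, hx'] at this
      have hsq := sub_projOnto_sq (M ⟨k, hkN⟩) x
      rw [hn, sub_self] at hsq
      have h0 : ‖x - projOnto (M ⟨k, hkN⟩) x‖ = 0 := by
        have := sq_eq_zero_iff.1 hsq
        simpa using this
      have : x - projOnto (M ⟨k, hkN⟩) x = 0 := norm_eq_zero.1 h0
      rw [sub_eq_zero] at this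
      exact this.symm
  refine (Submodule.mem_iInf M).2 fun i => ?_
  have h1 := hfix (i + 1) i.isLt
  rw [cycleProd_succ_apply M i.isLt, hfix i i.isLt.le] at h1
  rw [← h1]
  simpa using projOnto_mem (M ⟨(i : ℕ), i.isLt⟩) x

variable [CompleteSpace (⨅ i, M i : Submodule ℂ X)]

lemma P_T (x : X) :
    projOnto (⨅ i, M i) (cycleProd M N x) = projOnto (⨅ i, M i) x := by
  have h := projOnto_eq_zero (⨅ i, M i) (sub_T_mem_orthogonal M x)
  rw [map_sub] at h
  exact (sub_eq_zero.1 h).symm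

lemma P_T_pow (n : ℕ) (x : X) :
    projOnto (⨅ i, M i) ((cycleProd M N ^ n) x) = projOnto (⨅ i, M i) x := by
  induction n with
  | zero => simp
  | succ n ih => rw [pow_succ', ContinuousLinearMap.mul_apply, P_T M, ih]

lemma P_one_sub_T (u : X) :
    projOnto (⨅ i, M i) ((1 - cycleProd M N) u) = 0 := by
  rw [ContinuousLinearMap.sub_apply, ContinuousLinearMap.one_apply, map_sub, P_T, sub_self]

lemma halperin_sq (y : X) (n : ℕ) :
    ((n : ℝ) + 1) * ‖(cycleProd M N ^ n) ((1 - cycleProd M N) y)‖ ^ 2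
      ≤ (N : ℝ) * ‖y‖ ^ 2 := by
  set T := cycleProd M N with hT
  set a : ℕ → ℝ := fun j => ‖(T ^ j) ((1 - T) y)‖ with ha'
  have ha : Antitone a := antitone_nat_of_succ_le (fun j => by
    simp only [ha', pow_succ', ContinuousLinearMap.mul_apply]
    exact norm_T_le M _)
  have hA : Commute (1 - T) T := (Commute.one_left T).sub_left (Commute.refl T)
  have hterm : ∀ j : ℕ, a j ^ 2 ≤ (N : ℝ) * (‖(T ^ j) y‖ ^ 2 - ‖(T ^ (j + 1)) y‖ ^ 2) := by
    intro j
    have h := key_ineq M ((T ^ j) y)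
    have e1 : (T ^ j) ((1 - T) y) = (T ^ j) y - T ((T ^ j) y) := by
      have h2 := congrArg (fun f : X →L[ℂ] X => f y) ((hA.pow_right j).eq)
      simpa [ContinuousLinearMap.mul_apply, ContinuousLinearMap.sub_apply,
        ContinuousLinearMap.one_apply] using h2.symm
    have e2 : T ((T ^ j) y) = (T ^ (j + 1)) y := by
      rw [pow_succ', ContinuousLinearMap.mul_apply]
    simp only [ha', e1, e2] at h ⊢
    rw [← hT, e2] at h
    exact h
  have hsmul := Finset.card_nsmul_le_sum (Finset.range (n + 1))
    (fun j => a j ^ 2) (a n ^ 2)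
    (fun i hi => pow_le_pow_left₀ (norm_nonneg _)
      (ha (Nat.lt_succ_iff.1 (Finset.mem_range.1 hi))) 2)
  rw [Finset.card_range, nsmul_eq_mul] at hsmul
  have hsum2 : ∑ j ∈ Finset.range (n + 1), a j ^ 2
      ≤ (N : ℝ) * (‖y‖ ^ 2 - ‖(T ^ (n + 1)) y‖ ^ 2) := by
    calc ∑ j ∈ Finset.range (n + 1), a j ^ 2
        ≤ ∑ j ∈ Finset.range (n + 1), (N : ℝ) * (‖(T ^ j) y‖ ^ 2 - ‖(T ^ (j + 1)) y‖ ^ 2) :=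
          Finset.sum_le_sum fun j _ => hterm j
      _ = (N : ℝ) * ∑ j ∈ Finset.range (n + 1), (‖(T ^ j) y‖ ^ 2 - ‖(T ^ (j + 1)) y‖ ^ 2) :=
          (Finset.mul_sum _ _ _).symm
      _ = (N : ℝ) * (‖y‖ ^ 2 - ‖(T ^ (n + 1)) y‖ ^ 2) := by
          rw [Finset.sum_range_sub' (fun j => ‖(T ^ j) y‖ ^ 2)]
          simp
  have hNn : (0 : ℝ) ≤ (N : ℝ) := Nat.cast_nonneg N
  have hlast : (N : ℝ) * (‖y‖ ^ 2 - ‖(T ^ (n + 1)) y‖ ^ 2) ≤ (N : ℝ) * ‖y‖ ^ 2 := by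
    nlinarith [sq_nonneg ‖(T ^ (n + 1)) y‖]
  have hcast : ((n + 1 : ℕ) : ℝ) = (n : ℝ) + 1 := by push_cast; ring
  rw [hcast] at hsmul
  calc ((n : ℝ) + 1) * ‖(T ^ n) ((1 - T) y)‖ ^ 2 = ((n : ℝ) + 1) * a n ^ 2 := rfl
    _ ≤ ∑ j ∈ Finset.range (n + 1), a j ^ 2 := hsmul
    _ ≤ (N : ℝ) * ‖y‖ ^ 2 := hsum2.trans hlast

lemma iter_decay (k : ℕ) : ∃ C : ℝ, 0 ≤ C ∧ ∀ (u : X) (n : ℕ), 1 ≤ n →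
    ‖(cycleProd M N ^ n) (((1 - cycleProd M N) ^ k) u)‖ ^ 2
      ≤ C * (1 / (n : ℝ)) ^ k * ‖u‖ ^ 2 := by
  induction k with
  | zero =>
    exact ⟨1, zero_le_one, fun u n hn => by
      simpa using pow_le_pow_left₀ (norm_nonneg _) (norm_T_pow_le M n u) 2⟩
  | succ k ih =>
    obtain ⟨C, hC0, hC⟩ := ih
    refine ⟨C * ((2 : ℝ) ^ k * (2 * (N : ℝ))), by positivity, fun u n hn => ?_⟩
    set T := cycleProd M N with hT
    set n2 := n / 2 with hn2
    set n1 := n - n2 with hn1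
    have hn12 : n1 + n2 = n := Nat.sub_add_cancel (Nat.div_le_self n 2)
    have hn1pos : 1 ≤ n1 := by
      have : n2 < n := Nat.div_lt_self (by omega) (by norm_num)
      omega
    have hnpos : (0 : ℝ) < (n : ℝ) := by exact_mod_cast Nat.lt_of_lt_of_le Nat.zero_lt_one hn
    have hn1posR : (0 : ℝ) < (n1 : ℝ) := by exact_mod_cast hn1pos
    have hreal1 : (n : ℝ) ≤ 2 * (n1 : ℝ) := by
      have : n ≤ 2 * n1 := by omega
      exact_mod_cast this
    have hreal2 : (n : ℝ) ≤ 2 * ((n2 : ℝ) + 1) := by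
      have : n ≤ 2 * (n2 + 1) := by omega
      exact_mod_cast this
    have hA : Commute (1 - T) T := (Commute.one_left T).sub_left (Commute.refl T)
    have hop : (T ^ n1 * (1 - T) ^ k) * (T ^ n2 * (1 - T)) = T ^ n * (1 - T) ^ (k + 1) := by
      rw [(hA.pow_pow k n2).mul_mul_mul_comm, ← pow_add, ← pow_succ, hn12]
    set v : X := (T ^ n2) ((1 - T) u) with hv
    have happ : (T ^ n) (((1 - T) ^ (k + 1)) u) = (T ^ n1) (((1 - T) ^ k) v) :=
      calc (T ^ n) (((1 - T) ^ (k + 1)) u) = (T ^ n * (1 - T) ^ (k + 1)) u := rfl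
        _ = ((T ^ n1 * (1 - T) ^ k) * (T ^ n2 * (1 - T))) u := by rw [hop]
        _ = (T ^ n1) (((1 - T) ^ k) v) := rfl
    have hIH := hC v n1 hn1pos
    have hhal := halperin_sq M u n2
    -- ‖v‖^2 ≤ N * ‖u‖^2 * (2 / n)
    rw [← hT] at hhal
    have hv2 : ‖v‖ ^ 2 ≤ (N : ℝ) * ‖u‖ ^ 2 * (2 / (n : ℝ)) := by
      have h2n : ‖v‖ ^ 2 * (n : ℝ) ≤ (N : ℝ) * ‖u‖ ^ 2 * 2 := by
        have e1 : ‖v‖ ^ 2 * (n : ℝ) ≤ ‖v‖ ^ 2 * (2 * ((n2 : ℝ) + 1)) :=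
          mul_le_mul_of_nonneg_left hreal2 (sq_nonneg _)
        have e2 : ‖v‖ ^ 2 * (2 * ((n2 : ℝ) + 1)) = 2 * (((n2 : ℝ) + 1) * ‖v‖ ^ 2) := by ring
        have e3 : 2 * (((n2 : ℝ) + 1) * ‖v‖ ^ 2) ≤ 2 * ((N : ℝ) * ‖u‖ ^ 2) := by linarith
        linarith
      rw [show (N : ℝ) * ‖u‖ ^ 2 * (2 / (n : ℝ)) = ((N : ℝ) * ‖u‖ ^ 2 * 2) / (n : ℝ) by ring,
        le_div_iff₀ hnpos]
      exact h2n
    have hfrac : (1 / (n1 : ℝ)) ^ k ≤ (2 / (n : ℝ)) ^ k := by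
      apply pow_le_pow_left₀ (by positivity)
      rw [div_le_div_iff₀ hn1posR hnpos]
      nlinarith
    calc ‖(T ^ n) (((1 - T) ^ (k + 1)) u)‖ ^ 2 = ‖(T ^ n1) (((1 - T) ^ k) v)‖ ^ 2 := by
          rw [happ]
      _ ≤ C * (1 / (n1 : ℝ)) ^ k * ‖v‖ ^ 2 := hIH
      _ ≤ C * (2 / (n : ℝ)) ^ k * ((N : ℝ) * ‖u‖ ^ 2 * (2 / (n : ℝ))) := by
          have h1 : C * (1 / (n1 : ℝ)) ^ k * ‖v‖ ^ 2 ≤ C * (2 / (n : ℝ)) ^ k * ‖v‖ ^ 2 :=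
            mul_le_mul_of_nonneg_right
              (mul_le_mul_of_nonneg_left hfrac hC0) (sq_nonneg _)
          have h3 : (0 : ℝ) ≤ C * (2 / (n : ℝ)) ^ k := by positivity
          have h2 : C * (2 / (n : ℝ)) ^ k * ‖v‖ ^ 2
              ≤ C * (2 / (n : ℝ)) ^ k * ((N : ℝ) * ‖u‖ ^ 2 * (2 / (n : ℝ))) :=
            mul_le_mul_of_nonneg_left hv2 h3
          linarith
      _ = C * ((2 : ℝ) ^ k * (2 * (N : ℝ))) * (1 / (n : ℝ)) ^ (k + 1) * ‖u‖ ^ 2 := by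
          field_simp
          have ht : (n : ℝ) * (1 / (n : ℝ)) = 1 := mul_one_div_cancel hnpos.ne'
          linear_combination (-(C * 2 ^ k * (1 / (n : ℝ)) ^ k * N * ‖u‖ ^ 2)) * ht

lemma fix_iff_mem {x : X} : cycleProd M N x = x ↔ x ∈ ⨅ i, M i :=
  ⟨fun h => mem_iInf_of_fix M h, fun h => T_fix M h⟩

lemma orthogonal_range_one_sub_T :
    (LinearMap.range (((1 - cycleProd M N : X →L[ℂ] X) : X →ₗ[ℂ] X)))ᗮ = ⨅ i, M i := by
  set T := cycleProd M N with hT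
  apply le_antisymm
  · intro x hx
    have h1 : @inner ℂ _ _ ((1 - T) x) x = 0 :=
      (Submodule.mem_orthogonal _ x).1 hx _ ⟨x, rfl⟩
    have h2 : @inner ℂ _ _ (T x) x = @inner ℂ _ _ x x := by
      have := inner_sub_left (𝕜 := ℂ) x (T x) x
      rw [show (1 - T) x = x - T x from rfl] at h1
      rw [this] at h1
      -- h1 : ⟪x, x⟫ - ⟪T x, x⟫ = 0
      linear_combination -h1
    have h3 : T x = x := by
      apply eq_of_norm_le_re_inner_eq_norm_sq (𝕜 := ℂ) (norm_T_le M x)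
      rw [h2]
      simpa using inner_self_eq_norm_sq (𝕜 := ℂ) x
    exact mem_iInf_of_fix M h3
  · intro m hm
    rw [Submodule.mem_orthogonal]
    rintro u ⟨w, rfl⟩
    have h4 : (1 - T) w ∈ (⨅ i, M i)ᗮ := sub_T_mem_orthogonal M w
    exact (Submodule.mem_orthogonal' _ _).1 h4 m hm

variable [CompleteSpace X]

lemma range_dense : ∀ t ∈ (⨅ i, M i)ᗮ, ∀ σ : ℝ, 0 < σ →
    ∃ v, v ∈ (⨅ i, M i)ᗮ ∧ ‖(1 - cycleProd M N) v - t‖ < σ := by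
  intro t ht σ hσ
  set T := cycleProd M N with hT
  set R := LinearMap.range (((1 - T : X →L[ℂ] X) : X →ₗ[ℂ] X)) with hR
  have hclos : R.topologicalClosure = (⨅ i, M i)ᗮ := by
    rw [← Submodule.orthogonal_orthogonal_eq_closure, orthogonal_range_one_sub_T M]
  have ht' : t ∈ closure (R : Set X) := by
    rw [← Submodule.topologicalClosure_coe, hclos]
    exact ht
  obtain ⟨w, hw, hdist⟩ := Metric.mem_closure_iff.1 ht' σ hσ
  obtain ⟨u, rfl⟩ := hw
  refine ⟨u - projOnto (⨅ i, M i) u, sub_projOnto_mem_orthogonal _ u, ?_⟩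
  have h0 : (1 - T) (projOnto (⨅ i, M i) u) = 0 := by
    rw [ContinuousLinearMap.sub_apply, ContinuousLinearMap.one_apply,
      T_fix M (projOnto_mem _ u), sub_self]
  have h1 : (1 - T) (u - projOnto (⨅ i, M i) u) = (1 - T) u := by
    rw [map_sub, h0, sub_zero]
  rw [h1, ← dist_eq_norm, dist_comm]
  exact hdist

lemma norm_one_sub_T_pow_le (m : ℕ) (z : X) :
    ‖((1 - cycleProd M N) ^ m) z‖ ≤ 2 ^ m * ‖z‖ := by
  induction m generalizing z with
  | zero => simp
  | succ m ih =>
    rw [pow_succ, ContinuousLinearMap.mul_apply]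
    have h1 : ‖(1 - cycleProd M N) z‖ ≤ 2 * ‖z‖ := by
      rw [ContinuousLinearMap.sub_apply, ContinuousLinearMap.one_apply]
      calc ‖z - cycleProd M N z‖ ≤ ‖z‖ + ‖cycleProd M N z‖ := norm_sub_le _ _
        _ ≤ 2 * ‖z‖ := by have := norm_T_le M z; linarith
    calc ‖((1 - cycleProd M N) ^ m) ((1 - cycleProd M N) z)‖
        ≤ 2 ^ m * ‖(1 - cycleProd M N) z‖ := ih _
      _ ≤ 2 ^ m * (2 * ‖z‖) := by
          have : (0:ℝ) ≤ 2 ^ m := by positivity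
          exact mul_le_mul_of_nonneg_left h1 this
      _ = 2 ^ (m + 1) * ‖z‖ := by ring

lemma ml_dense (y : X) (hy : y ∈ (⨅ i, M i)ᗮ) {ε : ℝ} (hε : 0 < ε) :
    ∃ g : X, (∀ k : ℕ, ∃ u : X, ((1 - cycleProd M N) ^ k) u = g) ∧ ‖g - y‖ < ε := by
  set T := cycleProd M N with hT
  set A : X →L[ℂ] X := 1 - T with hA
  have key := range_dense M
  choose! F hF1 hF2 using key
  set σ : ℕ → ℝ := fun m => ε / 4 * (8 : ℝ)⁻¹ ^ m with hσ'
  have hσpos : ∀ m, 0 < σ m := fun m => by positivity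
  let vrec : ℕ → {z : X // z ∈ (⨅ i, M i)ᗮ} := fun m =>
    Nat.rec ⟨y, hy⟩ (fun m p => ⟨F p.1 (σ m), hF1 p.1 p.2 (σ m) (hσpos m)⟩) m
  set v : ℕ → X := fun m => (vrec m).1 with hv'
  have hv0 : v 0 = y := rfl
  have hvmem : ∀ m, v m ∈ (⨅ i, M i)ᗮ := fun m => (vrec m).2
  have hvs : ∀ m, ‖A (v (m + 1)) - v m‖ < σ m := fun m =>
    hF2 (v m) (hvmem m) (σ m) (hσpos m)
  have hgeom : ∀ k m : ℕ, dist ((A ^ m) (v (m + k))) ((A ^ (m + 1)) (v (m + 1 + k)))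
      ≤ ε / 4 * (1 / 4 : ℝ) ^ m := by
    intro k m
    have e1 : (A ^ (m + 1)) (v (m + 1 + k)) = (A ^ m) (A (v (m + k + 1))) := by
      rw [show m + 1 + k = m + k + 1 from by omega, pow_succ,
        ContinuousLinearMap.mul_apply]
    rw [dist_eq_norm, e1, ← map_sub]
    calc ‖(A ^ m) (v (m + k) - A (v (m + k + 1)))‖
        ≤ 2 ^ m * ‖v (m + k) - A (v (m + k + 1))‖ := norm_one_sub_T_pow_le M m _
      _ ≤ 2 ^ m * σ (m + k) := by
          have h2 : ‖v (m + k) - A (v (m + k + 1))‖ ≤ σ (m + k) := by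
            rw [norm_sub_rev]
            exact (hvs (m + k)).le
          exact mul_le_mul_of_nonneg_left h2 (by positivity)
      _ ≤ ε / 4 * (1 / 4 : ℝ) ^ m := by
          rw [hσ']
          have h8 : ((8 : ℝ)⁻¹) ^ (m + k) ≤ (8 : ℝ)⁻¹ ^ m :=
            pow_le_pow_of_le_one (by norm_num) (by norm_num) (by omega)
          calc (2 : ℝ) ^ m * (ε / 4 * (8 : ℝ)⁻¹ ^ (m + k))
              ≤ (2 : ℝ) ^ m * (ε / 4 * (8 : ℝ)⁻¹ ^ m) := by
                have : (0:ℝ) ≤ (2:ℝ) ^ m := by positivity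
                have h9 : ε / 4 * (8 : ℝ)⁻¹ ^ (m + k) ≤ ε / 4 * (8 : ℝ)⁻¹ ^ m :=
                  mul_le_mul_of_nonneg_left h8 (by positivity)
                exact mul_le_mul_of_nonneg_left h9 this
            _ = ε / 4 * ((2 : ℝ) ^ m * (8 : ℝ)⁻¹ ^ m) := by ring
            _ = ε / 4 * (1 / 4 : ℝ) ^ m := by
                rw [← mul_pow]
                norm_num
  have hw : ∀ k : ℕ, ∃ g : X, Tendsto (fun m => (A ^ m) (v (m + k))) atTop (𝓝 g) := by
    intro k
    apply cauchySeq_tendsto_of_complete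
    exact cauchySeq_of_le_geometric (1 / 4 : ℝ) (ε / 4) (by norm_num) (hgeom k)
  choose g hg using hw
  refine ⟨g 0, fun k => ⟨g k, ?_⟩, ?_⟩
  · have h1 : Tendsto (fun m => (A ^ k) ((A ^ m) (v (m + k)))) atTop (𝓝 ((A ^ k) (g k))) :=
      ((A ^ k).continuous.tendsto _).comp (hg k)
    have h2 : ∀ m : ℕ, (A ^ k) ((A ^ m) (v (m + k))) = (A ^ (m + k)) (v (m + k + 0)) := by
      intro m
      rw [← ContinuousLinearMap.mul_apply, ← pow_add, add_comm k m, add_zero]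
    have h3 : Tendsto (fun m => (A ^ (m + k)) (v (m + k + 0))) atTop (𝓝 (g 0)) :=
      (hg 0).comp (tendsto_add_atTop_nat k)
    have h4 := tendsto_nhds_unique (h1.congr (fun m => h2 m)) h3
    rw [← h4]
  · have hd := dist_le_of_le_geometric_of_tendsto₀ (1 / 4 : ℝ) (ε / 4) (by norm_num)
      (hgeom 0) (hg 0)
    have he : (A ^ 0) (v (0 + 0)) = y := by simp [hv0]
    rw [he] at hd
    have : dist y (g 0) ≤ (ε / 4) / (1 - 1 / 4) := hd
    rw [← dist_eq_norm, dist_comm]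
    calc dist y (g 0) ≤ (ε / 4) / (1 - 1 / 4) := this
      _ < ε := by linarith [show (ε / 4) / (1 - 1/4 : ℝ) = ε / 3 by ring]

end aux

/-- **Convergence of the alternating projections method, with super-polynomially fast
convergence on a dense subspace.** `‖Tⁿx - P_M x‖ → 0` for every `x ∈ X`, and there is
a dense subspace `X_∞` such that `n^α ‖Tⁿx - P_M x‖ → 0` for all `x ∈ X_∞`, `α > 0`. -/


theorem alternatingProjections_convergence_and_superpolynomial_rates
    {X : Type*} [NormedAddCommGroup X] [InnerProductSpace ℂ X] [CompleteSpace X]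
    {N : ℕ} (hN : 2 ≤ N) (M : Fin N → Submodule ℂ X) [∀ i, CompleteSpace (M i)]
    [CompleteSpace (⨅ i, M i : Submodule ℂ X)] :
    (∀ x : X,
      Tendsto (fun n : ℕ => ‖((cycleProd M N) ^ n) x - (projOnto (⨅ i, M i)) x‖)
        atTop (𝓝 0)) ∧
    ∃ Xinf : Submodule ℂ X, Dense (Xinf : Set X) ∧
      ∀ x ∈ Xinf, ∀ α : ℝ, 0 < α →
        Tendsto
          (fun n : ℕ =>
            (n : ℝ) ^ α * ‖((cycleProd M N) ^ n) x - (projOnto (⨅ i, M i)) x‖)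
          atTop (𝓝 0) := by
  classical
  set T : X →L[ℂ] X := cycleProd M N with hT
  set K : Submodule ℂ X := ⨅ i, M i with hK
  set P : X →L[ℂ] X := projOnto K with hP
  set G : Submodule ℂ X :=
    ⨅ k : ℕ, LinearMap.range ((((1 - T) ^ k : X →L[ℂ] X)) : X →ₗ[ℂ] X) with hG
  set Xinf : Submodule ℂ X := K ⊔ G with hXinf
  have hGmem : ∀ g : X, g ∈ G → ∀ k : ℕ, ∃ u : X, ((1 - T) ^ k) u = g := by
    intro g hg k
    have := (Submodule.mem_iInf _).1 hg k
    obtain ⟨u, hu⟩ := this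
    exact ⟨u, hu⟩
  -- super-polynomial decay on Xinf
  have hdecay : ∀ x ∈ Xinf, ∀ α : ℝ, 0 < α →
      Tendsto (fun n : ℕ => (n : ℝ) ^ α * ‖(T ^ n) x - P x‖) atTop (𝓝 0) := by
    intro x hx α hα
    obtain ⟨m, hm, g, hg, rfl⟩ := Submodule.mem_sup.1 hx
    have hgd := hGmem g hg
    have hdn : ∀ n : ℕ, (T ^ n) (m + g) - P (m + g) = (T ^ n) g := by
      intro n
      have h1 : (T ^ n) m = m := T_pow_fix M n hm
      have h2 : P m = m := projOnto_eq_self _ hm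
      have h3 : P g = 0 := by
        obtain ⟨u, hu⟩ := hgd 1
        rw [pow_one] at hu
        rw [← hu]
        exact P_one_sub_T M u
      rw [map_add, map_add, h1, h2, h3, add_zero]
      abel
    simp only [hdn]
    -- choose k
    set q : ℕ := ⌈α⌉₊ with hq
    set k : ℕ := 2 * q + 2 with hk
    obtain ⟨C, hC0, hC⟩ := iter_decay M k
    obtain ⟨u, hu⟩ := hgd k
    set D : ℝ := Real.sqrt (C * ‖u‖ ^ 2) with hD
    have hDpos : 0 ≤ D := Real.sqrt_nonneg _
    have hbound : ∀ n : ℕ, 1 ≤ n → (n : ℝ) ^ α * ‖(T ^ n) g‖ ≤ D * (1 / (n : ℝ)) := by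
      intro n hn
      have hn1 : (1 : ℝ) ≤ (n : ℝ) := by exact_mod_cast hn
      have hnpos : (0 : ℝ) < (n : ℝ) := by linarith
      have hsq : ((n : ℝ) ^ α * ‖(T ^ n) g‖) ^ 2 ≤ (D * (1 / (n : ℝ))) ^ 2 := by
        have e0 : ((n : ℝ) ^ α * ‖(T ^ n) g‖) ^ 2
            = ((n : ℝ) ^ α) ^ 2 * ‖(T ^ n) g‖ ^ 2 := by ring
        have e1 : ((n : ℝ) ^ α) ^ 2 = (n : ℝ) ^ (α + α) := by
          rw [Real.rpow_add hnpos]; ring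
        have e2 : (n : ℝ) ^ (α + α) ≤ (n : ℝ) ^ ((2 * q : ℕ) : ℝ) := by
          apply Real.rpow_le_rpow_of_exponent_le hn1
          have : α ≤ (q : ℝ) := Nat.le_ceil α
          push_cast
          linarith
        have e3 : (n : ℝ) ^ ((2 * q : ℕ) : ℝ) = (n : ℝ) ^ (2 * q : ℕ) :=
          Real.rpow_natCast _ _
        have e4 : ‖(T ^ n) g‖ ^ 2 ≤ C * (1 / (n : ℝ)) ^ k * ‖u‖ ^ 2 := by
          rw [← hu]; exact hC u n hn
        have e5 : (0 : ℝ) ≤ ((n : ℝ) ^ α) ^ 2 := sq_nonneg _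
        have e6 : ((n : ℝ) ^ α) ^ 2 * ‖(T ^ n) g‖ ^ 2
            ≤ (n : ℝ) ^ (2 * q : ℕ) * (C * (1 / (n : ℝ)) ^ k * ‖u‖ ^ 2) := by
          apply mul_le_mul
          · rw [e1] at *; rw [← e3]; exact e2
          · exact e4
          · exact sq_nonneg _
          · positivity
        have e7 : (n : ℝ) ^ (2 * q : ℕ) * (C * (1 / (n : ℝ)) ^ k * ‖u‖ ^ 2)
            = ((n : ℝ) * (1 / (n : ℝ))) ^ (2 * q : ℕ)
              * (C * ‖u‖ ^ 2) * (1 / (n : ℝ)) ^ 2 := by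
          rw [hk, mul_pow]
          ring
        have e8 : ((n : ℝ) * (1 / (n : ℝ))) = 1 := by
          field_simp
        have e9 : (D * (1 / (n : ℝ))) ^ 2 = (C * ‖u‖ ^ 2) * (1 / (n : ℝ)) ^ 2 := by
          rw [mul_pow, hD, Real.sq_sqrt (by positivity)]
        rw [e0, e9]
        calc ((n : ℝ) ^ α) ^ 2 * ‖(T ^ n) g‖ ^ 2
            ≤ (n : ℝ) ^ (2 * q : ℕ) * (C * (1 / (n : ℝ)) ^ k * ‖u‖ ^ 2) := e6
          _ = ((n : ℝ) * (1 / (n : ℝ))) ^ (2 * q : ℕ) * (C * ‖u‖ ^ 2) * (1 / (n : ℝ)) ^ 2 := e7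
          _ = (C * ‖u‖ ^ 2) * (1 / (n : ℝ)) ^ 2 := by rw [e8]; ring
      have hnn : 0 ≤ (n : ℝ) ^ α * ‖(T ^ n) g‖ := by positivity
      have hrhsnn : 0 ≤ D * (1 / (n : ℝ)) := by positivity
      nlinarith
    apply squeeze_zero' (f := fun n : ℕ => (n : ℝ) ^ α * ‖(T ^ n) g‖)
      (g := fun n : ℕ => D * (1 / (n : ℝ)))
    · filter_upwards with n
      positivity
    · filter_upwards [Filter.eventually_ge_atTop 1] with n hn
      exact hbound n hn
    · simpa using tendsto_one_div_atTop_nhds_zero_nat.const_mul D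
  -- density of Xinf
  have hdense : Dense (Xinf : Set X) := by
    rw [Metric.dense_iff]
    intro x r hr
    set y : X := x - P x with hy'
    have hy : y ∈ Kᗮ := sub_projOnto_mem_orthogonal K x
    obtain ⟨g, hg1, hg2⟩ := ml_dense M y hy hr
    refine ⟨P x + g, ?_, ?_⟩
    · rw [Metric.mem_ball, dist_eq_norm]
      have : P x + g - x = g - y := by
        rw [hy']
        abel
      rw [this]
      exact hg2
    · apply Submodule.add_mem_sup (projOnto_mem K x)
      exact (Submodule.mem_iInf _).2 fun k => ⟨(hg1 k).choose, (hg1 k).choose_spec⟩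
  refine ⟨?_, Xinf, hdense, hdecay⟩
  -- strong convergence for all x
  intro x
  rw [Metric.tendsto_atTop]
  intro ε hε
  have hr4 : 0 < ε / 4 := by linarith
  obtain ⟨z, hzball, hzmem⟩ := Metric.dense_iff.1 hdense x (ε / 4) hr4
  have hz : ‖x - z‖ < ε / 4 := by
    rw [← dist_eq_norm, dist_comm]
    exact Metric.mem_ball.1 hzball
  have htd := hdecay z hzmem 1 one_pos
  have htd0 : Tendsto (fun n : ℕ => ‖(T ^ n) z - P z‖) atTop (𝓝 0) := by
    apply squeeze_zero' (g := fun n : ℕ => (n : ℝ) ^ (1 : ℝ) * ‖(T ^ n) z - P z‖)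
    · filter_upwards with n; positivity
    · filter_upwards [Filter.eventually_ge_atTop 1] with n hn
      have hn1 : (1 : ℝ) ≤ (n : ℝ) := by exact_mod_cast hn
      have : (1 : ℝ) ≤ (n : ℝ) ^ (1 : ℝ) := by rwa [Real.rpow_one]
      calc ‖(T ^ n) z - P z‖ = 1 * ‖(T ^ n) z - P z‖ := (one_mul _).symm
        _ ≤ (n : ℝ) ^ (1 : ℝ) * ‖(T ^ n) z - P z‖ :=
            mul_le_mul_of_nonneg_right this (norm_nonneg _)
    · exact htd
  obtain ⟨n₀, hn₀⟩ := Filter.eventually_atTop.1 (htd0.eventually_lt_const hr4)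
  refine ⟨n₀, fun n hn => ?_⟩
  have hsplit : (T ^ n) x - P x = (T ^ n) (x - z) + ((T ^ n) z - P z) + P (z - x) := by
    rw [map_sub, map_sub]
    abel
  rw [Real.dist_eq, sub_zero, abs_of_nonneg (norm_nonneg _), hsplit]
  calc ‖(T ^ n) (x - z) + ((T ^ n) z - P z) + P (z - x)‖
      ≤ ‖(T ^ n) (x - z)‖ + ‖(T ^ n) z - P z‖ + ‖P (z - x)‖ := norm_add₃_le
    _ < ε := by
        have b1 : ‖(T ^ n) (x - z)‖ ≤ ‖x - z‖ := norm_T_pow_le M n _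
        have b2 : ‖(T ^ n) z - P z‖ < ε / 4 := hn₀ n hn
        have b3 : ‖P (z - x)‖ ≤ ‖z - x‖ := norm_projOnto_le K _
        have b4 : ‖z - x‖ = ‖x - z‖ := norm_sub_rev _ _
        linarith
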